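/- Let n ≥ 3 be an integer and p an odd prime with p > n. Let J be the n×n matrix over ZMod p with J·e_i = e_{i+1} for 1 ≤ i < n and J·e_n = 0, and let P = 1 + J and Q = 1 + J + J² in GL_n(ZMod p). In the semidirect product G = V ⋊ GL_n(ZMod p), where V is the additive group (ZMod p)^n (written multiplicatively) with the natural matrix action, let A be the subgroup generated by {inl(e_1), inr(P)} and B the subgroup generated by {inl(e_1), inr(Q)}. Then A and B are each generated by 2 elements, while any set generating the subgroup A ⊓ B has cardinality at least n. In particular, the minimal number of generators of A ⊓ B is n. -/
import Mathlib


open Matrix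

/-- The `n × n` nilpotent Jordan block over a ring `R`: `J e_i = e_{i+1}` for `i < n`
and `J e_n = 0`, i.e. the matrix with ones on the subdiagonal and zeros elsewhere. -/
def jordanJ (n : ℕ) (R : Type) [Ring R] : Matrix (Fin n) (Fin n) R :=
  Matrix.of fun i j => if (i : ℕ) = (j : ℕ) + 1 then 1 else 0

lemma jordanJ_apply {n : ℕ} (R : Type) [Ring R] (i j : Fin n) :
    jordanJ n R i j = if (i : ℕ) = (j : ℕ) + 1 then 1 else 0 := rfl

lemma jordanJ_mul_apply {n : ℕ} (R : Type) [CommRing R] (M : Matrix (Fin n) (Fin n) R)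
    (i j : Fin n) :
    (jordanJ n R * M) i j = if h : 0 < (i : ℕ) then M ⟨(i:ℕ) - 1, by omega⟩ j else 0 := by
  rw [Matrix.mul_apply]
  by_cases h : 0 < (i : ℕ)
  · rw [dif_pos h, Finset.sum_eq_single (⟨(i:ℕ)-1, by omega⟩ : Fin n)]
    · rw [jordanJ_apply, if_pos (by simp only [Fin.val_mk]; omega), one_mul]
    · intro b _ hb
      rw [jordanJ_apply, if_neg (by simp [Fin.ext_iff] at hb ⊢; omega), zero_mul]
    · simp
  · rw [dif_neg h]
    apply Finset.sum_eq_zero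
    intro b _
    rw [jordanJ_apply, if_neg (by omega), zero_mul]

lemma jordanJ_pow_apply {n : ℕ} (R : Type) [CommRing R] (k : ℕ) (i j : Fin n) :
    (jordanJ n R ^ k) i j = if (i : ℕ) = (j : ℕ) + k then 1 else 0 := by
  induction k generalizing i with
  | zero => simp [Matrix.one_apply, Fin.ext_iff]
  | succ k ih =>
    rw [pow_succ', jordanJ_mul_apply]
    by_cases h : 0 < (i : ℕ)
    · rw [dif_pos h, ih]
      simp only [Fin.val_mk]
      congr 1
      simp only [eq_iff_iff]
      omega
    · rw [dif_neg h, if_neg (by omega)]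

lemma jordanJ_pow_eq_zero {n : ℕ} (R : Type) [CommRing R] {k : ℕ} (hk : n ≤ k) :
    jordanJ n R ^ k = 0 := by
  ext i j
  rw [jordanJ_pow_apply, if_neg (by omega)]
  rfl

lemma one_add_nilpotent_pow_prime {n p : ℕ} (hp : p.Prime) (hnp : n ≤ p)
    (N : Matrix (Fin n) (Fin n) (ZMod p)) (hN : N ^ n = 0) :
    (1 + N) ^ p = 1 := by
  rw [(Commute.one_left N).add_pow]
  rw [Finset.sum_eq_single p]
  · simp
  · intro m hm hmp
    have hm' : m < p + 1 := Finset.mem_range.mp hm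
    rcases Nat.eq_zero_or_pos m with rfl | hm0
    · have : N ^ p = 0 := by
        have : N ^ p = N ^ n * N ^ (p - n) := by rw [← pow_add]; congr 1; omega
        rw [this, hN, zero_mul]
      simp [this]
    · have h0 : ((p.choose m : ℕ) : Matrix (Fin n) (Fin n) (ZMod p)) = 0 := by
        have h1 : ((p.choose m : ℕ) : ZMod p) = 0 := by
          rw [ZMod.natCast_eq_zero_iff]
          exact Nat.Prime.dvd_choose_self hp (by omega) (by omega)
        rw [show ((p.choose m : ℕ) : Matrix (Fin n) (Fin n) (ZMod p)) =
            (p.choose m) • (1 : Matrix (Fin n) (Fin n) (ZMod p)) by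
          rw [nsmul_eq_mul, mul_one]]
        rw [← Nat.cast_smul_eq_nsmul (ZMod p), h1, zero_smul]
      simp [h0]
  · simp

-- entries of (1+N)^b for N = J or J + J^2, at positions (0,0),(1,0),(2,0)
section entries
variable {n p : ℕ} (R : Type) [CommRing R]

lemma jordanJ_sq_mul_apply (M : Matrix (Fin n) (Fin n) R) (i j : Fin n) :
    (jordanJ n R ^ 2 * M) i j = if h : 1 < (i : ℕ) then M ⟨(i:ℕ) - 2, by omega⟩ j else 0 := by
  rw [pow_two, Matrix.mul_assoc, jordanJ_mul_apply]
  by_cases h : 0 < (i : ℕ)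
  · rw [dif_pos h, jordanJ_mul_apply]
    by_cases h2 : 1 < (i : ℕ)
    · rw [dif_pos (by simp only [Fin.val_mk]; omega), dif_pos h2]
      have : ((⟨(i:ℕ) - 1, by omega⟩ : Fin n) : ℕ) - 1 = (i:ℕ) - 2 := by
        simp only [Fin.val_mk]; omega
      congr 1 <;> try (apply Fin.ext; simpa using this)
    · rw [dif_neg (by simp only [Fin.val_mk]; omega), dif_neg h2]
  · rw [dif_neg h, dif_neg (show ¬ (1 : ℕ) < (i:ℕ) by omega)]

end entries

section ent
variable {n : ℕ} (R : Type) [CommRing R]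

lemma P_pow_entries (hn : 3 ≤ n) (a : ℕ) :
    ((1 + jordanJ n R) ^ a) ⟨0, by omega⟩ ⟨0, by omega⟩ = 1 ∧
    ((1 + jordanJ n R) ^ a) ⟨1, by omega⟩ ⟨0, by omega⟩ = (a : R) ∧
    ((1 + jordanJ n R) ^ a) ⟨2, by omega⟩ ⟨0, by omega⟩ = (a.choose 2 : R) := by
  induction a with
  | zero => simp [Matrix.one_apply, Fin.ext_iff]
  | succ a ih =>
    obtain ⟨h0, h1, h2⟩ := ih
    rw [pow_succ']
    simp only [add_mul, one_mul, Matrix.add_apply, jordanJ_mul_apply]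
    refine ⟨?_, ?_, ?_⟩
    · rw [dif_neg (by simp), h0, add_zero]
    · rw [dif_pos (by simp)]
      have : ((⟨(((⟨1, by omega⟩ : Fin n) : ℕ)) - 1, by omega⟩ : Fin n)) = (⟨0, by omega⟩ : Fin n) := by
        apply Fin.ext; simp
      rw [this, h0, h1]
      push_cast
      ring
    · rw [dif_pos (by simp)]
      have : ((⟨(((⟨2, by omega⟩ : Fin n) : ℕ)) - 1, by omega⟩ : Fin n)) = (⟨1, by omega⟩ : Fin n) := by
        apply Fin.ext; simp
      rw [this, h1, h2]
      rw [Nat.choose_succ_succ a 1]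
      push_cast [Nat.choose_one_right]
      ring

lemma Q_pow_entries (hn : 3 ≤ n) (b : ℕ) :
    (((1 + jordanJ n R + jordanJ n R ^ 2 : Matrix (Fin n) (Fin n) R)) ^ b) ⟨0, by omega⟩ ⟨0, by omega⟩ = 1 ∧
    (((1 + jordanJ n R + jordanJ n R ^ 2 : Matrix (Fin n) (Fin n) R)) ^ b) ⟨1, by omega⟩ ⟨0, by omega⟩ = (b : R) ∧
    (((1 + jordanJ n R + jordanJ n R ^ 2 : Matrix (Fin n) (Fin n) R)) ^ b) ⟨2, by omega⟩ ⟨0, by omega⟩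
      = (b : R) + (b.choose 2 : R) := by
  induction b with
  | zero => simp [Matrix.one_apply, Fin.ext_iff]
  | succ b ih =>
    obtain ⟨h0, h1, h2⟩ := ih
    rw [pow_succ']
    simp only [add_mul, one_mul, Matrix.add_apply, jordanJ_mul_apply, jordanJ_sq_mul_apply]
    refine ⟨?_, ?_, ?_⟩
    · rw [dif_neg (by simp), dif_neg (by simp), h0, add_zero, add_zero]
    · rw [dif_pos (by simp), dif_neg (by simp)]
      have : ((⟨(((⟨1, by omega⟩ : Fin n) : ℕ)) - 1, by omega⟩ : Fin n)) = (⟨0, by omega⟩ : Fin n) := by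
        apply Fin.ext; simp
      rw [this, h0, h1, add_zero]
      push_cast
      ring
    · rw [dif_pos (by simp), dif_pos (by simp)]
      have e1 : ((⟨(((⟨2, by omega⟩ : Fin n) : ℕ)) - 1, by omega⟩ : Fin n)) = (⟨1, by omega⟩ : Fin n) := by
        apply Fin.ext; simp
      have e2 : ((⟨(((⟨2, by omega⟩ : Fin n) : ℕ)) - 2, by omega⟩ : Fin n)) = (⟨0, by omega⟩ : Fin n) := by
        apply Fin.ext; simp
      rw [e1, e2, h0, h1, h2]
      rw [Nat.choose_succ_succ b 1]
      push_cast [Nat.choose_one_right]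
      ring
end ent

lemma pow_reduce {α : Type*} [Group α] (U : α) {p : ℕ} (hp : 0 < p) (hU : U ^ p = 1) (k : ℤ) :
    U ^ k = U ^ ((k % (p : ℤ)).toNat) := by
  conv_lhs => rw [← Int.mul_ediv_add_emod k (p : ℤ)]
  rw [_root_.zpow_add, _root_.zpow_mul, zpow_natCast, hU, _root_.one_zpow, one_mul,
    ← zpow_natCast, Int.toNat_of_nonneg (Int.emod_nonneg k (by exact_mod_cast hp.ne'))]

lemma zpowers_inter {n p : ℕ} (hn : 3 ≤ n) (hp : p.Prime) (hpn : n < p)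
    (P Q : GL (Fin n) (ZMod p))
    (hP : (P : Matrix (Fin n) (Fin n) (ZMod p)) = 1 + jordanJ n (ZMod p))
    (hQ : (Q : Matrix (Fin n) (Fin n) (ZMod p)) =
      1 + jordanJ n (ZMod p) + jordanJ n (ZMod p) ^ 2) :
    Subgroup.zpowers P ⊓ Subgroup.zpowers Q = ⊥ := by
  set J := jordanJ n (ZMod p) with hJ
  have hJn : J ^ n = 0 := jordanJ_pow_eq_zero _ le_rfl
  have hKn : (J + J ^ 2) ^ n = 0 := by
    have hc : Commute J (1 + J) := (Commute.one_right J).add_right (Commute.refl J)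
    have : J + J ^ 2 = J * (1 + J) := by rw [mul_add, mul_one, ← pow_two]
    rw [this, hc.mul_pow, hJn, zero_mul]
  have hPp : P ^ p = 1 := by
    ext1
    rw [Units.val_pow_eq_pow_val, hP, Units.val_one]
    exact one_add_nilpotent_pow_prime hp hpn.le J hJn
  have hQp : Q ^ p = 1 := by
    ext1
    rw [Units.val_pow_eq_pow_val, hQ, Units.val_one, add_assoc]
    exact one_add_nilpotent_pow_prime hp hpn.le _ hKn
  rw [eq_bot_iff]
  rintro x ⟨hxP, hxQ⟩
  obtain ⟨k, hk⟩ := Subgroup.mem_zpowers_iff.mp hxP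
  obtain ⟨l, hl⟩ := Subgroup.mem_zpowers_iff.mp hxQ
  set a : ℕ := ((k % (p : ℤ)).toNat) with ha
  set b : ℕ := ((l % (p : ℤ)).toNat) with hb
  have hap : a < p := by
    have := Int.emod_lt_of_pos k (show (0:ℤ) < p by exact_mod_cast hp.pos)
    omega
  have hbp : b < p := by
    have := Int.emod_lt_of_pos l (show (0:ℤ) < p by exact_mod_cast hp.pos)
    omega
  have hxa : x = P ^ a := by rw [← hk, pow_reduce P hp.pos hPp]
  have hxb : x = Q ^ b := by rw [← hl, pow_reduce Q hp.pos hQp]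
  have hmat : ((P ^ a : GL (Fin n) (ZMod p)) : Matrix (Fin n) (Fin n) (ZMod p)) =
      ((Q ^ b : GL (Fin n) (ZMod p)) : Matrix (Fin n) (Fin n) (ZMod p)) := by
    rw [← hxa, ← hxb]
  rw [Units.val_pow_eq_pow_val, Units.val_pow_eq_pow_val, hP, hQ] at hmat
  obtain ⟨_, hP1, hP2⟩ := P_pow_entries (ZMod p) hn a
  obtain ⟨_, hQ1, hQ2⟩ := Q_pow_entries (ZMod p) hn b
  have e1 : (a : ZMod p) = (b : ZMod p) := by
    rw [← hP1, ← hQ1, hmat]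
  have e2 : ((a.choose 2 : ℕ) : ZMod p) = (b : ZMod p) + ((b.choose 2 : ℕ) : ZMod p) := by
    rw [← hP2, ← hQ2, hmat]
  have hab : a = b := by
    have := congrArg ZMod.val e1
    rwa [ZMod.val_cast_of_lt hap, ZMod.val_cast_of_lt hbp] at this
  rw [hab] at e2
  have hb0 : (b : ZMod p) = 0 := by linear_combination -e2
  have hb00 : b = 0 := by
    have := congrArg ZMod.val hb0
    rwa [ZMod.val_cast_of_lt hbp, ZMod.val_zero] at this
  rw [Subgroup.mem_bot, hxb, hb00, pow_zero]

/-- The natural action of `GL n R` on the (multiplicatively written) additive group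
`Rⁿ` by matrix-vector multiplication, as a homomorphism to the automorphism group. -/
def glPhi (n : ℕ) (R : Type) [CommRing R] :
    GL (Fin n) R →* MulAut (Multiplicative (Fin n → R)) where
  toFun g :=
    { toFun := fun v => Multiplicative.ofAdd (g.val.mulVec v.toAdd)
      invFun := fun v => Multiplicative.ofAdd (g.inv.mulVec v.toAdd)
      left_inv := fun v => by
        simp [Matrix.mulVec_mulVec, g.inv_val, Matrix.one_mulVec]
      right_inv := fun v => by
        simp [Matrix.mulVec_mulVec, g.val_inv, Matrix.one_mulVec]
      map_mul' := fun u v => by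
        simp [Matrix.mulVec_add, ofAdd_add] }
  map_one' := by
    ext v
    simp [Matrix.one_mulVec]
  map_mul' g h := by
    ext v
    simp [Matrix.mulVec_mulVec]

section vecs
variable {n p : ℕ}

lemma jordanJ_mulVec (R : Type) [CommRing R] (v : Fin n → R) (i : Fin n) :
    (jordanJ n R).mulVec v i = if h : 0 < (i : ℕ) then v ⟨(i:ℕ) - 1, by omega⟩ else 0 := by
  rw [Matrix.mulVec, dotProduct]
  by_cases h : 0 < (i : ℕ)
  · rw [dif_pos h, Finset.sum_eq_single (⟨(i:ℕ)-1, by omega⟩ : Fin n)]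
    · rw [jordanJ_apply, if_pos (by simp only [Fin.val_mk]; omega), one_mul]
    · intro b _ hb
      rw [jordanJ_apply, if_neg (by simp [Fin.ext_iff] at hb ⊢; omega), zero_mul]
    · simp
  · rw [dif_neg h]
    apply Finset.sum_eq_zero
    intro b _
    rw [jordanJ_apply, if_neg (by omega), zero_mul]

/-- The submodule of vectors vanishing on coordinates `< m`. -/
def tailSub (n p m : ℕ) : Submodule (ZMod p) (Fin n → ZMod p) where
  carrier := {v | ∀ i : Fin n, (i : ℕ) < m → v i = 0}
  add_mem' := fun ha hb i hi => by rw [Pi.add_apply, ha i hi, hb i hi, add_zero]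
  zero_mem' := fun i _ => rfl
  smul_mem' := fun c v hv i hi => by rw [Pi.smul_apply, hv i hi, smul_zero]

lemma tailSub_le {m m' : ℕ} (h : m ≤ m') : tailSub n p m' ≤ tailSub n p m :=
  fun v hv i hi => hv i (by omega)

/-- `eVec m` is the `m`-th standard basis vector, or `0` if `m ≥ n`. -/
def eVec (n p m : ℕ) : Fin n → ZMod p :=
  if h : m < n then Pi.single ⟨m, h⟩ 1 else 0

lemma eVec_mem_tail (m : ℕ) : eVec n p m ∈ tailSub n p m := by
  intro i hi
  unfold eVec
  by_cases h : m < n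
  · rw [dif_pos h, Pi.single_apply, if_neg (by simp only [Fin.ext_iff, Fin.val_mk]; omega)]
  · rw [dif_neg h]; rfl

lemma mulVec_eVec (m : ℕ) :
    (jordanJ n (ZMod p)).mulVec (eVec n p m) = eVec n p (m+1) := by
  funext i
  rw [jordanJ_mulVec]
  unfold eVec
  by_cases h0 : 0 < (i : ℕ)
  · rw [dif_pos h0]
    by_cases hm : m < n
    · rw [dif_pos hm, Pi.single_apply]
      by_cases hm1 : m + 1 < n
      · rw [dif_pos hm1, Pi.single_apply]
        congr 1
        simp only [Fin.ext_iff, Fin.val_mk, eq_iff_iff]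
        omega
      · rw [dif_neg hm1, if_neg (by simp only [Fin.ext_iff, Fin.val_mk]; omega)]
        rfl
    · rw [dif_neg hm, dif_neg (by omega), Pi.zero_apply, Pi.zero_apply]
  · rw [dif_neg h0]
    by_cases hm1 : m + 1 < n
    · rw [dif_pos hm1, Pi.single_apply, if_neg (by simp only [Fin.ext_iff, Fin.val_mk]; omega)]
    · rw [dif_neg hm1, Pi.zero_apply]

lemma mulVec_tail {m : ℕ} {v : Fin n → ZMod p} (hv : v ∈ tailSub n p m) :
    (jordanJ n (ZMod p)).mulVec v ∈ tailSub n p (m+1) := by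
  intro i hi
  rw [jordanJ_mulVec]
  by_cases h0 : 0 < (i : ℕ)
  · rw [dif_pos h0]
    exact hv _ (by simp only [Fin.val_mk]; omega)
  · rw [dif_neg h0]

lemma single_eq_eVec (i : Fin n) : Pi.single i (1 : ZMod p) = eVec n p (i : ℕ) := by
  unfold eVec
  rw [dif_pos i.isLt]

end vecs

section sdp
variable {n p : ℕ}

abbrev Gnp (n p : ℕ) :=
  Multiplicative (Fin n → ZMod p) ⋊[glPhi n (ZMod p)] GL (Fin n) (ZMod p)

def pullV (H : Subgroup (Gnp n p)) : Submodule (ZMod p) (Fin n → ZMod p) :=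
  AddSubgroup.toZModSubmodule p
    { carrier := {v | SemidirectProduct.inl (Multiplicative.ofAdd v) ∈ H}
      zero_mem' := by
        show SemidirectProduct.inl (Multiplicative.ofAdd 0) ∈ H
        rw [ofAdd_zero, _root_.map_one]; exact H.one_mem
      add_mem' := by
        intro a b ha hb
        show SemidirectProduct.inl (Multiplicative.ofAdd (a + b)) ∈ H
        rw [ofAdd_add, _root_.map_mul]; exact H.mul_mem ha hb
      neg_mem' := by
        intro a ha
        show SemidirectProduct.inl (Multiplicative.ofAdd (-a)) ∈ H
        rw [ofAdd_neg, _root_.map_inv]; exact H.inv_mem ha }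

lemma mem_pullV {H : Subgroup (Gnp n p)} {v : Fin n → ZMod p} :
    v ∈ pullV H ↔ SemidirectProduct.inl (Multiplicative.ofAdd v) ∈ H := Iff.rfl

lemma mulVec_mem_pullV {H : Subgroup (Gnp n p)} {g : GL (Fin n) (ZMod p)}
    (hg : SemidirectProduct.inr (φ := glPhi n (ZMod p)) g ∈ H) {v} (hv : v ∈ pullV H) :
    (g : Matrix (Fin n) (Fin n) (ZMod p)).mulVec v ∈ pullV H := by
  rw [mem_pullV]
  have heq : (SemidirectProduct.inl (glPhi n (ZMod p) g (Multiplicative.ofAdd v)) : Gnp n p)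
      = SemidirectProduct.inr g * SemidirectProduct.inl (Multiplicative.ofAdd v)
        * SemidirectProduct.inr g⁻¹ := SemidirectProduct.inl_aut g _
  have h2 : glPhi n (ZMod p) g (Multiplicative.ofAdd v)
      = Multiplicative.ofAdd ((g : Matrix (Fin n) (Fin n) (ZMod p)).mulVec v) := rfl
  rw [h2] at heq
  rw [heq]
  refine H.mul_mem (H.mul_mem hg hv) ?_
  rw [show (SemidirectProduct.inr g⁻¹ : Gnp n p) = (SemidirectProduct.inr g)⁻¹ from
    _root_.map_inv _ g]
  exact H.inv_mem hg

lemma pi_single_rw (k : Fin n) :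
    (fun j => if k = j then (1 : ZMod p) else 0) = Pi.single k 1 := by
  funext j; rw [Pi.single_apply]; simp [eq_comm]

lemma all_mem_of_singles {H : Subgroup (Gnp n p)}
    (hs : ∀ i : Fin n,
      SemidirectProduct.inl (Multiplicative.ofAdd (Pi.single i (1 : ZMod p))) ∈ H)
    (v : Fin n → ZMod p) : SemidirectProduct.inl (Multiplicative.ofAdd v) ∈ H := by
  rw [← mem_pullV, pi_eq_sum_univ v]
  refine Submodule.sum_mem _ fun i _ => ?_
  rw [pi_single_rw i]
  exact Submodule.smul_mem _ _ ((mem_pullV (H := H)).mpr (hs i))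

lemma A_contains (hn : 0 < n) {P : GL (Fin n) (ZMod p)}
    (hP : (P : Matrix (Fin n) (Fin n) (ZMod p)) = 1 + jordanJ n (ZMod p))
    {A : Subgroup (Gnp n p)}
    (hA : A = Subgroup.closure
      {SemidirectProduct.inl (Multiplicative.ofAdd (Pi.single (⟨0, hn⟩ : Fin n) 1)),
        SemidirectProduct.inr (φ := glPhi n (ZMod p)) P})
    (v : Fin n → ZMod p) : SemidirectProduct.inl (Multiplicative.ofAdd v) ∈ A := by
  have he1 : eVec n p 0 ∈ pullV A := by
    rw [mem_pullV]
    have h : eVec n p 0 = Pi.single (⟨0, hn⟩ : Fin n) 1 := by unfold eVec; rw [dif_pos hn]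
    rw [h, hA]
    exact Subgroup.subset_closure (Set.mem_insert _ _)
  have hPA : SemidirectProduct.inr (φ := glPhi n (ZMod p)) P ∈ A := by
    rw [hA]
    exact Subgroup.subset_closure (Set.mem_insert_iff.mpr (Or.inr rfl))
  have hJstab : ∀ v ∈ pullV A, (jordanJ n (ZMod p)).mulVec v ∈ pullV A := by
    intro v hv
    have h2 : (jordanJ n (ZMod p)).mulVec v
        = (P : Matrix (Fin n) (Fin n) (ZMod p)).mulVec v - v := by
      rw [hP, Matrix.add_mulVec, Matrix.one_mulVec, add_sub_cancel_left]
    rw [h2]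
    exact Submodule.sub_mem _ (mulVec_mem_pullV hPA hv) hv
  have hall : ∀ m : ℕ, eVec n p m ∈ pullV A := by
    intro m
    induction m with
    | zero => exact he1
    | succ m ih => rw [← mulVec_eVec]; exact hJstab _ ih
  exact all_mem_of_singles
    (fun i => (mem_pullV (H := A)).mp (by rw [single_eq_eVec i]; exact hall (i : ℕ))) v

lemma B_contains (hn : 0 < n) {Q : GL (Fin n) (ZMod p)}
    (hQ : (Q : Matrix (Fin n) (Fin n) (ZMod p)) =
      1 + jordanJ n (ZMod p) + jordanJ n (ZMod p) ^ 2)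
    {B : Subgroup (Gnp n p)}
    (hB : B = Subgroup.closure
      {SemidirectProduct.inl (Multiplicative.ofAdd (Pi.single (⟨0, hn⟩ : Fin n) 1)),
        SemidirectProduct.inr (φ := glPhi n (ZMod p)) Q})
    (v : Fin n → ZMod p) : SemidirectProduct.inl (Multiplicative.ofAdd v) ∈ B := by
  set Kv : (Fin n → ZMod p) → (Fin n → ZMod p) :=
    fun v => (jordanJ n (ZMod p)).mulVec v
      + (jordanJ n (ZMod p)).mulVec ((jordanJ n (ZMod p)).mulVec v) with hKv
  have he1 : eVec n p 0 ∈ pullV B := by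
    rw [mem_pullV]
    have h : eVec n p 0 = Pi.single (⟨0, hn⟩ : Fin n) 1 := by unfold eVec; rw [dif_pos hn]
    rw [h, hB]
    exact Subgroup.subset_closure (Set.mem_insert _ _)
  have hQB : SemidirectProduct.inr (φ := glPhi n (ZMod p)) Q ∈ B := by
    rw [hB]
    exact Subgroup.subset_closure (Set.mem_insert_iff.mpr (Or.inr rfl))
  have hKstab : ∀ v ∈ pullV B, Kv v ∈ pullV B := by
    intro v hv
    have h2 : Kv v = (Q : Matrix (Fin n) (Fin n) (ZMod p)).mulVec v - v := by
      rw [hQ, Matrix.add_mulVec, Matrix.add_mulVec, Matrix.one_mulVec, pow_two,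
        ← Matrix.mulVec_mulVec]
      simp only [hKv]
      abel
    rw [h2]
    exact Submodule.sub_mem _ (mulVec_mem_pullV hQB hv) hv
  have hKpow : ∀ m : ℕ, ∃ w ∈ tailSub n p (m+1), Kv^[m] (eVec n p 0) = eVec n p m + w := by
    intro m
    induction m with
    | zero => exact ⟨0, (tailSub n p 1).zero_mem, by simp⟩
    | succ m ih =>
      obtain ⟨w, hw, hEq⟩ := ih
      refine ⟨eVec n p (m+2) + Kv w, ?_, ?_⟩
      · refine Submodule.add_mem _ (tailSub_le (by omega) (eVec_mem_tail (m+2))) ?_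
        exact Submodule.add_mem _ (mulVec_tail hw)
          (tailSub_le (by omega) (mulVec_tail (mulVec_tail hw)))
      · rw [Function.iterate_succ_apply', hEq]
        show Kv (eVec n p m + w) = eVec n p (m+1) + (eVec n p (m+2) + Kv w)
        simp only [hKv, Matrix.mulVec_add, mulVec_eVec]
        abel
  have hIter : ∀ m : ℕ, Kv^[m] (eVec n p 0) ∈ pullV B := by
    intro m
    induction m with
    | zero => exact he1
    | succ m ih => rw [Function.iterate_succ_apply']; exact hKstab _ ih
  have hdown : ∀ d : ℕ, ∀ i : Fin n, n - d ≤ (i : ℕ) → Pi.single i (1 : ZMod p) ∈ pullV B := by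
    intro d
    induction d with
    | zero => intro i hi; exact absurd i.isLt (by omega)
    | succ d ih =>
      intro i hi
      by_cases hcase : n - d ≤ (i : ℕ)
      · exact ih i hcase
      · obtain ⟨w, hw, hEq⟩ := hKpow (i : ℕ)
        have hwB : w ∈ pullV B := by
          rw [pi_eq_sum_univ w]
          refine Submodule.sum_mem _ fun j _ => ?_
          by_cases hj : (j : ℕ) < (i : ℕ) + 1
          · rw [hw j hj, zero_smul]; exact Submodule.zero_mem _
          · rw [pi_single_rw j]
            exact Submodule.smul_mem _ _ (ih j (by omega))
        rw [single_eq_eVec]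
        have h3 : eVec n p (i : ℕ) = Kv^[(i : ℕ)] (eVec n p 0) - w := by rw [hEq]; abel
        rw [h3]
        exact Submodule.sub_mem _ (hIter _) hwB
  exact all_mem_of_singles
    (fun i => (mem_pullV (H := B)).mp (hdown n i (by omega))) v

end sdp

lemma lower_bound {n p : ℕ} (hp : p.Prime) (S : Set (Gnp n p))
    (hS : Subgroup.closure S =
      (SemidirectProduct.inl : Multiplicative (Fin n → ZMod p) →* Gnp n p).range) :
    n ≤ S.ncard := by
  haveI : Fact p.Prime := ⟨hp⟩
  haveI : NeZero p := ⟨hp.ne_zero⟩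
  have hsub : S ⊆ (((SemidirectProduct.inl :
      Multiplicative (Fin n → ZMod p) →* Gnp n p).range : Subgroup (Gnp n p)) :
      Set (Gnp n p)) := by
    rw [← hS]; exact Subgroup.subset_closure
  have hSfin : S.Finite := by
    refine Set.Finite.subset (Set.finite_range
      (SemidirectProduct.inl : Multiplicative (Fin n → ZMod p) →* Gnp n p)) ?_
    intro x hx
    obtain ⟨y, hy⟩ := hsub hx
    exact ⟨y, hy⟩
  set T : Set (Fin n → ZMod p) :=
    (fun g : Gnp n p => Multiplicative.toAdd g.left) '' S with hT
  have hTcard : T.ncard ≤ S.ncard := Set.ncard_image_le hSfin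
  have hspan : Submodule.span (ZMod p) T = ⊤ := by
    rw [eq_top_iff]
    intro v _
    have hv : SemidirectProduct.inl (Multiplicative.ofAdd v) ∈ Subgroup.closure S := by
      rw [hS]; exact ⟨Multiplicative.ofAdd v, rfl⟩
    have key : ∀ g ∈ Subgroup.closure S,
        g ∈ (SemidirectProduct.inl : Multiplicative (Fin n → ZMod p) →* Gnp n p).range ∧
        Multiplicative.toAdd g.left ∈ Submodule.span (ZMod p) T := by
      intro g hg
      induction hg using Subgroup.closure_induction with
      | mem x hx =>
        refine ⟨hsub hx, Submodule.subset_span ⟨x, hx, rfl⟩⟩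
      | one =>
        refine ⟨one_mem _, ?_⟩
        show Multiplicative.toAdd (1 : Multiplicative (Fin n → ZMod p)) ∈ _
        rw [toAdd_one]
        exact Submodule.zero_mem _
      | mul x y hx hy ihx ihy =>
        obtain ⟨⟨a, rfl⟩, hxa⟩ := ihx
        obtain ⟨⟨b, rfl⟩, hyb⟩ := ihy
        rw [← _root_.map_mul]
        refine ⟨⟨a * b, rfl⟩, ?_⟩
        rw [SemidirectProduct.left_inl] at hxa hyb ⊢
        rw [toAdd_mul]
        exact Submodule.add_mem _ hxa hyb
      | inv x hx ihx =>
        obtain ⟨⟨a, rfl⟩, hxa⟩ := ihx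
        rw [← _root_.map_inv]
        refine ⟨⟨a⁻¹, rfl⟩, ?_⟩
        rw [SemidirectProduct.left_inl] at hxa ⊢
        rw [toAdd_inv]
        exact Submodule.neg_mem _ hxa
    have := (key _ hv).2
    rwa [SemidirectProduct.left_inl, toAdd_ofAdd] at this
  have hTfin : T.Finite := hSfin.image _
  haveI : Fintype T := hTfin.fintype
  have h2 : Module.finrank (ZMod p) (Fin n → ZMod p) ≤ T.toFinset.card := by
    have h3 := finrank_span_le_card (R := ZMod p) T
    rwa [hspan, finrank_top] at h3
  have h4 : Module.finrank (ZMod p) (Fin n → ZMod p) = n := by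
    rw [Module.finrank_pi (ZMod p)]
    simp
  rw [h4] at h2
  calc n ≤ T.toFinset.card := h2
    _ = T.ncard := (Set.ncard_eq_toFinset_card' T).symm
    _ ≤ S.ncard := hTcard

/-- In the semidirect product `G = V ⋊ GL n (ZMod p)`, the subgroups
`A = ⟨inl e₁, inr P⟩` and `B = ⟨inl e₁, inr Q⟩` (with `P = 1 + J`, `Q = 1 + J + J²`)
are each generated by 2 elements, every generating set of `A ⊓ B` has at least `n`
elements, and `A ⊓ B` has a generating set with exactly `n` elements; so the minimal
number of generators of `A ⊓ B` is `n`. -/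
theorem two_generated_subgroups_with_rank_n_intersection (n p : ℕ) (hn : 3 ≤ n)
    (hp : p.Prime) (hodd : Odd p) (hpn : n < p) (P Q : GL (Fin n) (ZMod p))
    (hP : (P : Matrix (Fin n) (Fin n) (ZMod p)) = 1 + jordanJ n (ZMod p))
    (hQ : (Q : Matrix (Fin n) (Fin n) (ZMod p)) =
      1 + jordanJ n (ZMod p) + jordanJ n (ZMod p) ^ 2) :
    ∀ A B : Subgroup (Multiplicative (Fin n → ZMod p) ⋊[glPhi n (ZMod p)]
        GL (Fin n) (ZMod p)),
      A = Subgroup.closure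
          {SemidirectProduct.inl
              (Multiplicative.ofAdd (Pi.single (⟨0, by omega⟩ : Fin n) 1)),
            SemidirectProduct.inr (φ := glPhi n (ZMod p)) P} →
      B = Subgroup.closure
          {SemidirectProduct.inl
              (Multiplicative.ofAdd (Pi.single (⟨0, by omega⟩ : Fin n) 1)),
            SemidirectProduct.inr (φ := glPhi n (ZMod p)) Q} →
      (∃ S : Finset (Multiplicative (Fin n → ZMod p) ⋊[glPhi n (ZMod p)]
          GL (Fin n) (ZMod p)), S.card ≤ 2 ∧ Subgroup.closure (S : Set _) = A) ∧
      (∃ S : Finset (Multiplicative (Fin n → ZMod p) ⋊[glPhi n (ZMod p)]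
          GL (Fin n) (ZMod p)), S.card ≤ 2 ∧ Subgroup.closure (S : Set _) = B) ∧
      (∀ S : Set (Multiplicative (Fin n → ZMod p) ⋊[glPhi n (ZMod p)]
          GL (Fin n) (ZMod p)), Subgroup.closure S = A ⊓ B → n ≤ S.ncard) ∧
      (∃ S : Finset (Multiplicative (Fin n → ZMod p) ⋊[glPhi n (ZMod p)]
          GL (Fin n) (ZMod p)), S.card = n ∧ Subgroup.closure (S : Set _) = A ⊓ B) := by
  intro A B hA hB
  haveI : Fact p.Prime := ⟨hp⟩
  haveI : NeZero p := ⟨hp.ne_zero⟩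
  classical
  have hn0 : 0 < n := by omega
  -- A ⊓ B = inl.range
  have hAle : A ≤ (Subgroup.zpowers P).comap
      (SemidirectProduct.rightHom : Gnp n p →* GL (Fin n) (ZMod p)) := by
    rw [hA, Subgroup.closure_le]
    rintro x hx
    simp only [Set.mem_insert_iff, Set.mem_singleton_iff] at hx
    rcases hx with rfl | rfl
    · exact SetLike.mem_coe.mpr (Subgroup.mem_comap.mpr (by
        rw [SemidirectProduct.rightHom_inl]; exact Subgroup.one_mem _))
    · exact SetLike.mem_coe.mpr (Subgroup.mem_comap.mpr (by
        rw [SemidirectProduct.rightHom_inr]; exact Subgroup.mem_zpowers _))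
  have hBle : B ≤ (Subgroup.zpowers Q).comap
      (SemidirectProduct.rightHom : Gnp n p →* GL (Fin n) (ZMod p)) := by
    rw [hB, Subgroup.closure_le]
    rintro x hx
    simp only [Set.mem_insert_iff, Set.mem_singleton_iff] at hx
    rcases hx with rfl | rfl
    · exact SetLike.mem_coe.mpr (Subgroup.mem_comap.mpr (by
        rw [SemidirectProduct.rightHom_inl]; exact Subgroup.one_mem _))
    · exact SetLike.mem_coe.mpr (Subgroup.mem_comap.mpr (by
        rw [SemidirectProduct.rightHom_inr]; exact Subgroup.mem_zpowers _))
  have hABeq : A ⊓ B = (SemidirectProduct.inl :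
      Multiplicative (Fin n → ZMod p) →* Gnp n p).range := by
    apply le_antisymm
    · intro g hg
      rw [Subgroup.mem_inf] at hg
      have h1 : SemidirectProduct.rightHom g ∈ Subgroup.zpowers P ⊓ Subgroup.zpowers Q :=
        ⟨Subgroup.mem_comap.mp (hAle hg.1), Subgroup.mem_comap.mp (hBle hg.2)⟩
      rw [zpowers_inter hn hp hpn P Q hP hQ, Subgroup.mem_bot] at h1
      rw [SemidirectProduct.range_inl_eq_ker_rightHom]
      exact h1
    · rintro g ⟨x, rfl⟩
      rw [Subgroup.mem_inf]
      constructor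
      · have := A_contains hn0 hP hA (Multiplicative.toAdd x)
        simpa using this
      · have := B_contains hn0 hQ hB (Multiplicative.toAdd x)
        simpa using this
  refine ⟨?_, ?_, ?_, ?_⟩
  · refine ⟨{SemidirectProduct.inl
        (Multiplicative.ofAdd (Pi.single (⟨0, by omega⟩ : Fin n) 1)),
      SemidirectProduct.inr (φ := glPhi n (ZMod p)) P}, ?_, ?_⟩
    · exact (Finset.card_insert_le _ _).trans (by simp)
    · rw [hA]
      congr 1
      simp
  · refine ⟨{SemidirectProduct.inl
        (Multiplicative.ofAdd (Pi.single (⟨0, by omega⟩ : Fin n) 1)),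
      SemidirectProduct.inr (φ := glPhi n (ZMod p)) Q}, ?_, ?_⟩
    · exact (Finset.card_insert_le _ _).trans (by simp)
    · rw [hB]
      congr 1
      simp
  · intro S hS
    rw [hABeq] at hS
    exact lower_bound hp S hS
  · have hinj : Function.Injective (fun i : Fin n =>
        (SemidirectProduct.inl (Multiplicative.ofAdd (Pi.single i (1 : ZMod p))) : Gnp n p)) := by
      intro i j hij
      have h2 : (Pi.single i 1 : Fin n → ZMod p) = Pi.single j 1 := by
        have := congrArg (fun g : Gnp n p => Multiplicative.toAdd g.left) hij
        simpa using this
      by_contra hne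
      have h3 := congrFun h2 i
      rw [Pi.single_eq_same, Pi.single_eq_of_ne hne] at h3
      exact one_ne_zero h3
    refine ⟨Finset.image (fun i : Fin n =>
        (SemidirectProduct.inl (Multiplicative.ofAdd (Pi.single i (1 : ZMod p))) : Gnp n p))
        Finset.univ, ?_, ?_⟩
    · rw [Finset.card_image_of_injective _ hinj, Finset.card_univ, Fintype.card_fin]
    · rw [hABeq]
      apply le_antisymm
      · rw [Subgroup.closure_le]
        rintro x hx
        simp only [Finset.coe_image, Finset.coe_univ, Set.image_univ, Set.mem_range] at hx
        obtain ⟨i, rfl⟩ := hx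
        exact ⟨_, rfl⟩
      · rintro g ⟨x, rfl⟩
        have hs : ∀ i : Fin n,
            (SemidirectProduct.inl (Multiplicative.ofAdd (Pi.single i (1 : ZMod p))) : Gnp n p) ∈
            Subgroup.closure ((Finset.image (fun i : Fin n =>
              (SemidirectProduct.inl (Multiplicative.ofAdd (Pi.single i (1 : ZMod p))) : Gnp n p))
              Finset.univ : Finset (Gnp n p)) : Set (Gnp n p)) := by
          intro i
          apply Subgroup.subset_closure
          simp only [Finset.coe_image, Finset.coe_univ, Set.image_univ, Set.mem_range]
          exact ⟨i, rfl⟩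
        exact all_mem_of_singles hs (Multiplicative.toAdd x)
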